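/- arXiv:1209.4703 — 8 statements merged into one kernel-verified Lean document; each statement's English description precedes it below -/
import Mathlib

section
/- Let D be a probability distribution over price vectors p ∈ ℝ≥0^m and let v be a monotone subadditive valuation. If a bid vector b is drawn from the same distribution D, then E_{b∼D} E_{p∼D}[v(W(b,p))] ≥ (1/2)·v([m]), where W(b,p) = {j : b(j) ≥ p(j)} (ties broken by any fixed symmetric rule so that W(b,p) and W(p,b) partition [m]). -/
open Finset

/-- If a bid vector `b` is drawn from the same (finitely supported) distribution `D` as the
prices `p`, then for a monotone subadditive `v`,
`E_{b∼D} E_{p∼D} [v(W(b,p))] ≥ (1/2) v([m])`, where `W(b,p) = {j : b j ≥ p j}`. -/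
theorem stmt1 (m N : ℕ) (v : Finset (Fin m) → ℝ)
    (hnn : ∀ S, 0 ≤ v S)
    (hmono : ∀ S T : Finset (Fin m), S ⊆ T → v S ≤ v T)
    (hsub : ∀ S T : Finset (Fin m), v (S ∪ T) ≤ v S + v T)
    (D : Fin N → Fin m → ℝ) (hD : ∀ i j, 0 ≤ D i j)
    (μ : Fin N → ℝ) (hμ0 : ∀ i, 0 ≤ μ i) (hμ1 : ∑ i, μ i = 1) :
    (1 / 2) * v Finset.univ ≤
      ∑ i, ∑ k, μ i * μ k * v (Finset.univ.filter fun j => D k j ≤ D i j) := by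
  set S := ∑ i, ∑ k, μ i * μ k * v (Finset.univ.filter fun j => D k j ≤ D i j) with hS
  have hswap : S = ∑ i, ∑ k, μ i * μ k * v (Finset.univ.filter fun j => D i j ≤ D k j) := by
    rw [hS, Finset.sum_comm]
    exact Finset.sum_congr rfl fun i _ => Finset.sum_congr rfl fun k _ => by
      rw [mul_comm (μ k) (μ i)]
  have key : ∀ i k : Fin N, v Finset.univ ≤
      v (Finset.univ.filter fun j => D k j ≤ D i j) +
      v (Finset.univ.filter fun j => D i j ≤ D k j) := by
    intro i k
    calc v Finset.univ
        ≤ v ((Finset.univ.filter fun j => D k j ≤ D i j) ∪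
            (Finset.univ.filter fun j => D i j ≤ D k j)) := by
          apply hmono
          intro j _
          simp only [Finset.mem_union, Finset.mem_filter, Finset.mem_univ, true_and]
          exact le_total (D k j) (D i j)
      _ ≤ _ := hsub _ _
  have hconst : ∑ i, ∑ k, μ i * μ k * v Finset.univ = v Finset.univ := by
    simp_rw [mul_assoc, ← Finset.mul_sum, ← Finset.sum_mul, hμ1, one_mul]
  have hmain : v Finset.univ ≤ 2 * S := by
    calc v Finset.univ = ∑ i, ∑ k, μ i * μ k * v Finset.univ := hconst.symm
      _ ≤ ∑ i, ∑ k, μ i * μ k * (v (Finset.univ.filter fun j => D k j ≤ D i j) +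
            v (Finset.univ.filter fun j => D i j ≤ D k j)) := by
          apply Finset.sum_le_sum; intro i _
          apply Finset.sum_le_sum; intro k _
          exact mul_le_mul_of_nonneg_left (key i k) (mul_nonneg (hμ0 i) (hμ0 k))
      _ = S + S := by
          simp_rw [mul_add, Finset.sum_add_distrib]
          rw [← hS, ← hswap]
      _ = 2 * S := by ring
  linarith
end

section
/- For any finitely supported distribution D over price vectors p ∈ ℝ≥0^m and any monotone subadditive valuation v, there exists a bid vector b₀ ∈ ℝ≥0^m such that E_{p∼D}[v(W(b₀,p))] − Σ_j b₀(j) ≥ (1/2)·v([m]) − E_{p∼D}[Σ_j p(j)]. -/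
open Finset

/-- For any finitely supported distribution over price vectors and any monotone subadditive `v`,
there exists a bid vector `b₀` with
`E_p[v(W(b₀,p))] − Σ_j b₀ j ≥ (1/2) v([m]) − E_p[Σ_j p j]`. -/
theorem stmt2 (m N : ℕ) (v : Finset (Fin m) → ℝ)
    (hnn : ∀ S, 0 ≤ v S)
    (hmono : ∀ S T : Finset (Fin m), S ⊆ T → v S ≤ v T)
    (hsub : ∀ S T : Finset (Fin m), v (S ∪ T) ≤ v S + v T)
    (D : Fin N → Fin m → ℝ) (hD : ∀ i j, 0 ≤ D i j)
    (μ : Fin N → ℝ) (hμ0 : ∀ i, 0 ≤ μ i) (hμ1 : ∑ i, μ i = 1) :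
    ∃ b₀ : Fin m → ℝ, (∀ j, 0 ≤ b₀ j) ∧
      (1 / 2) * v Finset.univ - ∑ k, μ k * ∑ j, D k j ≤
        (∑ k, μ k * v (Finset.univ.filter fun j => D k j ≤ b₀ j)) - ∑ j, b₀ j := by
  have hN : 0 < N := Nat.pos_of_ne_zero (by rintro rfl; simp at hμ1)
  haveI : Nonempty (Fin N) := Fin.pos_iff_nonempty.mp hN
  set f : Fin N → ℝ := fun i =>
    (∑ k, μ k * v (Finset.univ.filter fun j => D k j ≤ D i j)) - ∑ j, D i j with hf
  obtain ⟨i0, hi0⟩ := Finite.exists_max f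
  refine ⟨D i0, fun j => hD i0 j, ?_⟩
  -- the double sum of winning-set values is at least half of v(univ)
  have hS : (1 / 2) * v Finset.univ ≤
      ∑ i, ∑ k, μ i * (μ k * v (Finset.univ.filter fun j => D k j ≤ D i j)) := by
    have hterm : ∀ i k : Fin N, μ i * μ k * v Finset.univ ≤
        μ i * (μ k * v (Finset.univ.filter fun j => D k j ≤ D i j))
        + μ i * (μ k * v (Finset.univ.filter fun j => D i j ≤ D k j)) := by
      intro i k
      have hsub2 : v Finset.univ ≤
          v (Finset.univ.filter fun j => D k j ≤ D i j)
          + v (Finset.univ.filter fun j => D i j ≤ D k j) := by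
        calc v Finset.univ
            ≤ v ((Finset.univ.filter fun j => D k j ≤ D i j)
                ∪ (Finset.univ.filter fun j => D i j ≤ D k j)) := by
              apply hmono
              intro j _
              simp [Finset.mem_union, Finset.mem_filter, le_total (D k j) (D i j)]
          _ ≤ _ := hsub _ _
      have h := mul_le_mul_of_nonneg_left hsub2 (mul_nonneg (hμ0 i) (hμ0 k))
      nlinarith [h]
    have h2 : v Finset.univ ≤
        ∑ i, ∑ k, (μ i * (μ k * v (Finset.univ.filter fun j => D k j ≤ D i j))
          + μ i * (μ k * v (Finset.univ.filter fun j => D i j ≤ D k j))) := by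
      have hμμ : ∑ i : Fin N, ∑ k : Fin N, μ i * μ k * v Finset.univ = v Finset.univ := by
        simp only [mul_assoc, ← Finset.mul_sum, ← Finset.sum_mul, hμ1, one_mul]
      calc v Finset.univ = ∑ i : Fin N, ∑ k : Fin N, μ i * μ k * v Finset.univ := hμμ.symm
        _ ≤ _ := Finset.sum_le_sum fun i _ => Finset.sum_le_sum fun k _ => hterm i k
    have hsymm : ∑ i, ∑ k, μ i * (μ k * v (Finset.univ.filter fun j => D i j ≤ D k j))
        = ∑ i, ∑ k, μ i * (μ k * v (Finset.univ.filter fun j => D k j ≤ D i j)) := by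
      rw [Finset.sum_comm]
      exact Finset.sum_congr rfl fun i _ => Finset.sum_congr rfl fun k _ => by ring
    simp only [Finset.sum_add_distrib] at h2
    rw [hsymm] at h2
    linarith
  -- average of f is at least the target
  have h1 : (1 / 2) * v Finset.univ - ∑ k, μ k * ∑ j, D k j ≤ ∑ i, μ i * f i := by
    have hfsum : ∑ i, μ i * f i =
        (∑ i, ∑ k, μ i * (μ k * v (Finset.univ.filter fun j => D k j ≤ D i j)))
          - ∑ k, μ k * ∑ j, D k j := by
      simp only [hf, mul_sub, Finset.sum_sub_distrib, Finset.mul_sum]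
    rw [hfsum]
    linarith
  -- the maximizer dominates the average
  have h3 : ∑ i, μ i * f i ≤ f i0 := by
    calc ∑ i, μ i * f i ≤ ∑ i, μ i * f i0 :=
          Finset.sum_le_sum fun i _ => mul_le_mul_of_nonneg_left (hi0 i) (hμ0 i)
      _ = f i0 := by rw [← Finset.sum_mul, hμ1, one_mul]
  exact h1.trans h3
end

section
/- Let v be monotone subadditive on 2^[m] and q ∈ ℝ≥0^m a price vector. Let T ⊆ [m] be a maximal (with respect to inclusion) set satisfying v(T) ≤ q(T). Then the truncated vector q̃, defined by q̃(j) = 0 for j ∈ T and q̃(j) = q(j) otherwise, is dominated by v: for every set S ⊆ [m], Σ_{j∈S} q̃(j) ≤ v(S). -/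
open Finset

/-- If `T` is a maximal set with `v(T) ≤ q(T)` for monotone subadditive `v`, then the
truncated price vector `q̃` (zero on `T`, equal to `q` off `T`) is dominated by `v`. -/
theorem stmt3 (m : ℕ) (v : Finset (Fin m) → ℝ)
    (hnn : ∀ S, 0 ≤ v S)
    (hmono : ∀ S T : Finset (Fin m), S ⊆ T → v S ≤ v T)
    (hsub : ∀ S T : Finset (Fin m), v (S ∪ T) ≤ v S + v T)
    (q : Fin m → ℝ) (hq : ∀ j, 0 ≤ q j)
    (T : Finset (Fin m))
    (hT : v T ≤ ∑ j ∈ T, q j)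
    (hmax : ∀ T' : Finset (Fin m), T ⊂ T' → ¬ v T' ≤ ∑ j ∈ T', q j) :
    ∀ S : Finset (Fin m), (∑ j ∈ S, if j ∈ T then 0 else q j) ≤ v S := by
  intro S
  set S' := S \ T with hS'
  have hsum : (∑ j ∈ S, if j ∈ T then 0 else q j) = ∑ j ∈ S', q j := by
    rw [hS', Finset.sdiff_eq_filter, Finset.sum_filter]
    apply Finset.sum_congr rfl
    intro j _
    by_cases h : j ∈ T <;> simp [h]
  rw [hsum]
  rcases eq_or_ne S' ∅ with h | h
  · rw [h, Finset.sum_empty]; exact hnn S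
  · have hdisj : Disjoint T S' := Finset.disjoint_sdiff
    have hssub : T ⊂ T ∪ S' := by
      refine Finset.ssubset_iff_of_subset (Finset.subset_union_left) |>.2 ?_
      obtain ⟨x, hx⟩ := Finset.nonempty_iff_ne_empty.2 h
      exact ⟨x, Finset.mem_union_right _ hx, (Finset.mem_sdiff.1 hx).2⟩
    have hlt : ∑ j ∈ T ∪ S', q j < v (T ∪ S') := lt_of_not_ge (hmax _ hssub)
    rw [Finset.sum_union hdisj] at hlt
    have h1 : v (T ∪ S') ≤ v T + v S' := hsub T S'
    have h2 : v S' ≤ v S := hmono _ _ (Finset.sdiff_subset)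
    linarith
end

section
/- With v, q, T, q̃ as in the truncation construction (T a maximal set with v(T) ≤ q(T), and q̃ the truncation of q to zero on T), for every bid vector b: v(W(b,q)) + q([m]) ≥ v(W(b,q̃)) + q̃([m]). -/
open Finset

/-- With `T` a maximal set satisfying `v(T) ≤ q(T)` and `q̃` the truncation of `q` to zero on
`T`, for every bid vector `b`: `v(W(b,q)) + q([m]) ≥ v(W(b,q̃)) + q̃([m])`. -/
theorem stmt4 (m : ℕ) (v : Finset (Fin m) → ℝ)
    (hnn : ∀ S, 0 ≤ v S)
    (hmono : ∀ S T : Finset (Fin m), S ⊆ T → v S ≤ v T)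
    (hsub : ∀ S T : Finset (Fin m), v (S ∪ T) ≤ v S + v T)
    (q : Fin m → ℝ) (hq : ∀ j, 0 ≤ q j)
    (T : Finset (Fin m))
    (hT : v T ≤ ∑ j ∈ T, q j)
    (hmax : ∀ T' : Finset (Fin m), T ⊂ T' → ¬ v T' ≤ ∑ j ∈ T', q j)
    (b : Fin m → ℝ) :
    v (Finset.univ.filter fun j => (if j ∈ T then 0 else q j) ≤ b j) +
        (∑ j, if j ∈ T then 0 else q j) ≤
      v (Finset.univ.filter fun j => q j ≤ b j) + ∑ j, q j := by
  have hsum : (∑ j, if j ∈ T then 0 else q j) + ∑ j ∈ T, q j = ∑ j, q j := by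
    have : ∑ j ∈ T, q j = ∑ j : Fin m, if j ∈ T then q j else 0 := by
      rw [Finset.sum_ite_mem, Finset.univ_inter]
    rw [this, ← Finset.sum_add_distrib]
    apply Finset.sum_congr rfl
    intro j _
    split <;> ring
  have hsubset : (Finset.univ.filter fun j => (if j ∈ T then 0 else q j) ≤ b j)
      ⊆ (Finset.univ.filter fun j => q j ≤ b j) ∪ T := by
    intro j hj
    simp only [Finset.mem_filter, Finset.mem_univ, true_and] at hj
    by_cases h : j ∈ T
    · exact Finset.mem_union_right _ h
    · simp [h] at hj
      exact Finset.mem_union_left _ (by simp [hj])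
  have h1 : v (Finset.univ.filter fun j => (if j ∈ T then 0 else q j) ≤ b j)
      ≤ v (Finset.univ.filter fun j => q j ≤ b j) + ∑ j ∈ T, q j := by
    calc _ ≤ v ((Finset.univ.filter fun j => q j ≤ b j) ∪ T) := hmono _ _ hsubset
      _ ≤ v (Finset.univ.filter fun j => q j ≤ b j) + v T := hsub _ _
      _ ≤ _ := by linarith
  linarith
end

section
/- For any finitely supported distribution D over price vectors in ℝ≥0^m and any monotone subadditive valuation v, there exists a bid vector b₀ that is dominated by v (i.e., Σ_{j∈S} b₀(j) ≤ v(S) for all S) and satisfies E_{p∼D}[v(W(b₀,p))] − Σ_j b₀(j) ≥ (1/2)·v([m]) − E_{p∼D}[Σ_j p(j)]. -/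
open Finset

/-- For any finitely supported distribution over price vectors and any monotone subadditive `v`,
there exists a bid vector `b₀` dominated by `v` (no overbidding) with
`E_p[v(W(b₀,p))] − Σ_j b₀ j ≥ (1/2) v([m]) − E_p[Σ_j p j]`. -/
theorem stmt5 (m N : ℕ) (v : Finset (Fin m) → ℝ)
    (hnn : ∀ S, 0 ≤ v S)
    (hmono : ∀ S T : Finset (Fin m), S ⊆ T → v S ≤ v T)
    (hsub : ∀ S T : Finset (Fin m), v (S ∪ T) ≤ v S + v T)
    (D : Fin N → Fin m → ℝ) (hD : ∀ i j, 0 ≤ D i j)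
    (μ : Fin N → ℝ) (hμ0 : ∀ i, 0 ≤ μ i) (hμ1 : ∑ i, μ i = 1) :
    ∃ b₀ : Fin m → ℝ, (∀ j, 0 ≤ b₀ j) ∧
      (∀ S : Finset (Fin m), ∑ j ∈ S, b₀ j ≤ v S) ∧
      (1 / 2) * v Finset.univ - ∑ k, μ k * ∑ j, D k j ≤
        (∑ k, μ k * v (Finset.univ.filter fun j => D k j ≤ b₀ j)) - ∑ j, b₀ j := by
  classical
  -- maximal truncation sets
  have hT : ∀ k : Fin N, ∃ T : Finset (Fin m),
      (v T ≤ ∑ j ∈ T, D k j ∨ T = ∅) ∧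
      (∀ S : Finset (Fin m), v S ≤ ∑ j ∈ S, D k j → S.card ≤ T.card) := by
    intro k
    set F : Finset (Finset (Fin m)) :=
      univ.powerset.filter (fun S => v S ≤ ∑ j ∈ S, D k j) with hF
    by_cases hne : F.Nonempty
    · obtain ⟨T, hTF, hmax⟩ := F.exists_max_image Finset.card hne
      refine ⟨T, Or.inl ?_, ?_⟩
      · exact (mem_filter.1 hTF).2
      · intro S hS
        exact hmax S (mem_filter.2 ⟨mem_powerset.2 (subset_univ S), hS⟩)
    · refine ⟨∅, Or.inr rfl, ?_⟩
      intro S hS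
      exact absurd ⟨S, mem_filter.2 ⟨mem_powerset.2 (subset_univ S), hS⟩⟩ hne
  choose T hT1 hT2 using hT
  -- truncated bids
  set b : Fin N → Fin m → ℝ := fun k j => if j ∈ T k then 0 else D k j with hb
  have hbnn : ∀ k j, 0 ≤ b k j := by
    intro k j; simp only [hb]; split
    · exact le_refl 0
    · exact hD k j
  -- sum of bids on a set
  have hbsum : ∀ k (S : Finset (Fin m)), ∑ j ∈ S, b k j = ∑ j ∈ S \ T k, D k j := by
    intro k S
    rw [Finset.sdiff_eq_filter, Finset.sum_filter]
    refine Finset.sum_congr rfl ?_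
    intro j _
    by_cases h : j ∈ T k <;> simp [hb, h]
  -- domination: b k is dominated by v
  have hdom : ∀ k (S : Finset (Fin m)), ∑ j ∈ S, b k j ≤ v S := by
    intro k S
    rw [hbsum]
    by_contra hlt
    push_neg at hlt
    have hSd : v (S \ T k) < ∑ j ∈ S \ T k, D k j :=
      lt_of_le_of_lt (hmono _ _ (sdiff_subset)) hlt
    rcases hT1 k with hTk | hTk
    · -- T k is in the family; T k ∪ S is a bigger family member
      have hmem : v (T k ∪ (S \ T k)) ≤ ∑ j ∈ T k ∪ (S \ T k), D k j := by
        have h1 : v (T k ∪ (S \ T k)) ≤ v (T k) + v (S \ T k) := hsub _ _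
        have h2 : ∑ j ∈ T k ∪ (S \ T k), D k j
            = ∑ j ∈ T k, D k j + ∑ j ∈ S \ T k, D k j := by
          rw [Finset.sum_union (Finset.disjoint_sdiff)]
        rw [h2]
        calc v (T k ∪ (S \ T k)) ≤ v (T k) + v (S \ T k) := h1
          _ ≤ ∑ j ∈ T k, D k j + ∑ j ∈ S \ T k, D k j :=
            add_le_add hTk hSd.le
      have hcard := hT2 k _ hmem
      have hsub' : T k ⊆ T k ∪ (S \ T k) := subset_union_left
      have heq : T k ∪ (S \ T k) = T k := by
        exact (Finset.eq_of_subset_of_card_le hsub' hcard).symm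
      have hempty : S \ T k = ∅ := by
        have : S \ T k ⊆ T k := by
          intro x hx
          have : x ∈ T k ∪ (S \ T k) := mem_union_right _ hx
          rwa [heq] at this
        ext x
        simp only [mem_sdiff, notMem_empty, iff_false]
        rintro ⟨hxS, hxT⟩
        exact hxT (this (mem_sdiff.2 ⟨hxS, hxT⟩))
      rw [hempty] at hSd
      simp at hSd
      exact absurd hSd (not_lt.2 (hnn ∅))
    · -- T k = ∅; then S \ T k itself is a family member of positive card
      have hmem : v (S \ T k) ≤ ∑ j ∈ S \ T k, D k j := hSd.le
      have hcard := hT2 k _ hmem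
      rw [hTk, Finset.sdiff_empty] at hSd hcard
      simp only [Finset.card_empty, Nat.le_zero, Finset.card_eq_zero] at hcard
      rw [hcard] at hSd
      simp only [Finset.sum_empty] at hSd
      exact absurd hSd (not_lt.2 (hnn ∅))
  -- c k : money collected on the truncation set
  set c : Fin N → ℝ := fun k => ∑ j ∈ T k, D k j with hc
  have hcnn : ∀ k, 0 ≤ c k := fun k => Finset.sum_nonneg (fun j _ => hD k j)
  -- winning sets
  set W : Fin N → Fin N → Finset (Fin m) :=
    fun k k' => univ.filter (fun j => D k' j ≤ b k j) with hW
  -- key covering inequality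
  have hkey : ∀ k k' : Fin N, v univ ≤ v (W k k') + v (W k' k) + c k + c k' := by
    intro k k'
    have hcover : (univ : Finset (Fin m)) ⊆ W k k' ∪ W k' k ∪ T k ∪ T k' := by
      intro j _
      by_cases hjk : j ∈ T k
      · exact mem_union_left _ (mem_union_right _ hjk)
      by_cases hjk' : j ∈ T k'
      · exact mem_union_right _ hjk'
      rcases le_total (D k' j) (D k j) with h | h
      · refine mem_union_left _ (mem_union_left _ (mem_union_left _ ?_))
        simp only [hW, mem_filter, mem_univ, true_and, hb]
        rw [if_neg hjk]; exact h
      · refine mem_union_left _ (mem_union_left _ (mem_union_right _ ?_))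
        simp only [hW, mem_filter, mem_univ, true_and, hb]
        rw [if_neg hjk']; exact h
    have hTb : ∀ l : Fin N, ∀ X : Finset (Fin m), v (X ∪ T l) ≤ v X + c l := by
      intro l X
      rcases hT1 l with h | h
      · exact le_trans (hsub _ _) (add_le_add_right h _)
      · rw [h, Finset.union_empty]
        exact le_add_of_nonneg_right (hcnn l)
    calc v univ ≤ v (W k k' ∪ W k' k ∪ T k ∪ T k') := hmono _ _ hcover
      _ ≤ v (W k k' ∪ W k' k ∪ T k) + c k' := hTb k' _
      _ ≤ v (W k k' ∪ W k' k) + c k + c k' := by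
          have := hTb k (W k k' ∪ W k' k)
          linarith
      _ ≤ v (W k k') + v (W k' k) + c k + c k' := by
          have := hsub (W k k') (W k' k)
          linarith
  -- averaging
  set A : ℝ := ∑ k, μ k * ∑ k', μ k' * v (W k k') with hA
  set P : ℝ := ∑ k, μ k * ∑ j, D k j with hP
  set C : ℝ := ∑ k, μ k * c k with hC
  have havg : v univ ≤ 2 * A + 2 * C := by
    have h1 : ∑ k' : Fin N, μ k' * v univ = v univ := by
      rw [← Finset.sum_mul, hμ1, one_mul]
    have hdouble : v univ = ∑ k, μ k * ∑ k', μ k' * v univ := by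
      simp_rw [h1]
    rw [hdouble]
    have hswap : ∑ k, μ k * ∑ k', μ k' * v (W k' k) = A := by
      rw [hA]
      simp_rw [Finset.mul_sum]
      rw [Finset.sum_comm]
      refine Finset.sum_congr rfl (fun k _ => ?_)
      refine Finset.sum_congr rfl (fun k' _ => ?_)
      ring
    have hCk : ∑ k, μ k * ∑ k', μ k' * c k = C := by
      rw [hC]
      refine Finset.sum_congr rfl (fun k _ => ?_)
      rw [← Finset.sum_mul, hμ1, one_mul]
    have hCk' : ∑ k, μ k * ∑ k', μ k' * c k' = C := by
      rw [← Finset.sum_mul, hμ1, one_mul, hC]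
    have hstep : ∑ k, μ k * ∑ k', μ k' * v univ ≤
        ∑ k, μ k * ∑ k', μ k' * (v (W k k') + v (W k' k) + c k + c k') := by
      refine Finset.sum_le_sum (fun k _ => ?_)
      refine mul_le_mul_of_nonneg_left ?_ (hμ0 k)
      refine Finset.sum_le_sum (fun k' _ => ?_)
      exact mul_le_mul_of_nonneg_left (hkey k k') (hμ0 k')
    refine le_trans hstep ?_
    have hexpand : ∑ k, μ k * ∑ k', μ k' * (v (W k k') + v (W k' k) + c k + c k')
        = (∑ k, μ k * ∑ k', μ k' * v (W k k')) + (∑ k, μ k * ∑ k', μ k' * v (W k' k))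
          + (∑ k, μ k * ∑ k', μ k' * c k) + (∑ k, μ k * ∑ k', μ k' * c k') := by
      rw [← Finset.sum_add_distrib, ← Finset.sum_add_distrib, ← Finset.sum_add_distrib]
      refine Finset.sum_congr rfl (fun k _ => ?_)
      rw [← mul_add, ← mul_add, ← mul_add]
      congr 1
      rw [← Finset.sum_add_distrib, ← Finset.sum_add_distrib, ← Finset.sum_add_distrib]
      refine Finset.sum_congr rfl (fun k' _ => ?_)
      ring
    rw [hexpand, ← hA, hswap, hCk, hCk']
    linarith
  -- total bid
  have hbtot : ∀ k, ∑ j, b k j = (∑ j, D k j) - c k := by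
    intro k
    rw [hbsum k univ, hc]
    have : (univ : Finset (Fin m)) = (univ \ T k) ∪ T k := by
      rw [Finset.sdiff_union_of_subset (subset_univ _)]
    calc ∑ j ∈ univ \ T k, D k j
        = (∑ j ∈ univ \ T k, D k j + ∑ j ∈ T k, D k j) - ∑ j ∈ T k, D k j := by ring
      _ = (∑ j, D k j) - ∑ j ∈ T k, D k j := by
          rw [← Finset.sum_union (Finset.sdiff_disjoint), ← this]
  -- utilities
  set u : Fin N → ℝ := fun k => (∑ k', μ k' * v (W k k')) - ∑ j, b k j with hu
  have husum : (1/2 : ℝ) * v univ - P ≤ ∑ k, μ k * u k := by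
    have hsplit : ∑ k, μ k * u k = A - ∑ k, μ k * ∑ j, b k j := by
      rw [hA]
      simp_rw [hu, mul_sub]
      rw [Finset.sum_sub_distrib]
    have hbb : ∑ k, μ k * ∑ j, b k j = P - C := by
      rw [hP, hC, ← Finset.sum_sub_distrib]
      refine Finset.sum_congr rfl (fun k _ => ?_)
      rw [hbtot k]
      ring
    rw [hsplit, hbb]
    linarith [havg]
  -- extract a good k
  obtain ⟨k₀, hk₀⟩ : ∃ k, 0 < μ k := by
    by_contra h
    push_neg at h
    have : ∑ i, μ i ≤ 0 := Finset.sum_nonpos (fun i _ => h i)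
    rw [hμ1] at this
    linarith
  obtain ⟨k₁, hk₁⟩ : ∃ k, (1/2 : ℝ) * v univ - P ≤ u k := by
    by_contra h
    push_neg at h
    have hlt : ∑ k, μ k * u k < ∑ k, μ k * ((1/2 : ℝ) * v univ - P) := by
      refine Finset.sum_lt_sum (fun k _ => ?_) ⟨k₀, mem_univ k₀, ?_⟩
      · exact mul_le_mul_of_nonneg_left (h k).le (hμ0 k)
      · exact mul_lt_mul_of_pos_left (h k₀) hk₀
    rw [← Finset.sum_mul, hμ1, one_mul] at hlt
    linarith [husum]
  refine ⟨b k₁, hbnn k₁, hdom k₁, ?_⟩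
  calc (1/2 : ℝ) * v univ - ∑ k, μ k * ∑ j, D k j
      = (1/2 : ℝ) * v univ - P := by rw [hP]
    _ ≤ u k₁ := hk₁
    _ = (∑ k, μ k * v (univ.filter fun j => D k j ≤ b k₁ j)) - ∑ j, b k₁ j := by
        rw [hu, hW]
end

section
/- For a fixed price vector p ∈ ℝ≥0^m and any monotone subadditive valuation v, there exists a bid vector b dominated by v such that v(W(b,p)) − Σ_j b(j) ≥ v([m]) − Σ_j p(j). -/
open Finset

/-- For a fixed price vector `p` and any monotone subadditive `v`, there exists a bid `b`
dominated by `v` with `v(W(b,p)) − Σ_j b j ≥ v([m]) − Σ_j p j`. -/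
theorem stmt6 (m : ℕ) (v : Finset (Fin m) → ℝ)
    (hnn : ∀ S, 0 ≤ v S)
    (hmono : ∀ S T : Finset (Fin m), S ⊆ T → v S ≤ v T)
    (hsub : ∀ S T : Finset (Fin m), v (S ∪ T) ≤ v S + v T)
    (p : Fin m → ℝ) (hp : ∀ j, 0 ≤ p j) :
    ∃ b : Fin m → ℝ, (∀ j, 0 ≤ b j) ∧
      (∀ S : Finset (Fin m), ∑ j ∈ S, b j ≤ v S) ∧
      v Finset.univ - ∑ j, p j ≤
        v (Finset.univ.filter fun j => p j ≤ b j) - ∑ j, b j := by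
  by_cases hF : ∃ T : Finset (Fin m), v T ≤ ∑ j ∈ T, p j
  · obtain ⟨T, hTmem, hTmax⟩ := Finset.exists_max_image
      (Finset.univ.filter fun T : Finset (Fin m) => v T ≤ ∑ j ∈ T, p j)
      Finset.card (by obtain ⟨T, hT⟩ := hF; exact ⟨T, by simp [hT]⟩)
    have hT : v T ≤ ∑ j ∈ T, p j := (Finset.mem_filter.mp hTmem).2
    -- key claim: for any S, ∑_{j ∈ S \ T} p j ≤ v (S \ T)
    have key : ∀ S : Finset (Fin m), ∑ j ∈ S \ T, p j ≤ v (S \ T) := by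
      intro S
      rcases (S \ T).eq_empty_or_nonempty with h | h
      · simp [h, hnn ∅]
      · have hdisj : Disjoint T (S \ T) := Finset.disjoint_sdiff
        have hcard : T.card < (T ∪ (S \ T)).card := by
          rw [Finset.card_union_of_disjoint hdisj]
          have := Finset.card_pos.mpr h
          omega
        have hnotmem : ¬ v (T ∪ (S \ T)) ≤ ∑ j ∈ T ∪ (S \ T), p j := by
          intro hle
          have := hTmax (T ∪ (S \ T)) (Finset.mem_filter.mpr ⟨Finset.mem_univ _, hle⟩)
          omega
        push_neg at hnotmem
        have hsum : ∑ j ∈ T ∪ (S \ T), p j = ∑ j ∈ T, p j + ∑ j ∈ S \ T, p j :=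
          Finset.sum_union hdisj
        have hsplit := hsub T (S \ T)
        nlinarith [hnotmem, hsplit, hT]
    refine ⟨fun j => if j ∈ T then 0 else p j, ?_, ?_, ?_⟩
    · intro j
      dsimp only
      split_ifs
      · exact le_refl 0
      · exact hp j
    · intro S
      have hsum : ∑ j ∈ S, (if j ∈ T then 0 else p j) = ∑ j ∈ S \ T, p j := by
        rw [Finset.sum_ite, Finset.sum_const_zero, zero_add, Finset.sdiff_eq_filter]
      rw [hsum]
      exact (key S).trans (hmono _ _ (Finset.sdiff_subset))
    · have hWsub : Finset.univ \ T ⊆ Finset.univ.filter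
          (fun j => p j ≤ if j ∈ T then 0 else p j) := by
        intro j hj
        rw [Finset.mem_sdiff] at hj
        simp [hj.2]
      have hvW := hmono _ _ hWsub
      have hsumb : ∑ j, (if j ∈ T then 0 else p j) = ∑ j ∈ Finset.univ \ T, p j := by
        rw [Finset.sum_ite, Finset.sum_const_zero, zero_add, Finset.sdiff_eq_filter]
      have hsplit : ∑ j, p j = ∑ j ∈ T, p j + ∑ j ∈ Finset.univ \ T, p j := by
        rw [← Finset.sum_union Finset.disjoint_sdiff, Finset.union_sdiff_of_subset (Finset.subset_univ T)]
      have huniv : v Finset.univ ≤ v T + v (Finset.univ \ T) := by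
        have := hsub T (Finset.univ \ T)
        rwa [Finset.union_sdiff_of_subset (Finset.subset_univ T)] at this
      rw [hsumb]
      linarith
  · push_neg at hF
    refine ⟨p, hp, fun S => le_of_lt (hF S), ?_⟩
    have : Finset.univ.filter (fun j => p j ≤ p j) = (Finset.univ : Finset (Fin m)) := by simp
    rw [this]
end

section
/- In a simultaneous first-price auction (complete-information, pure-strategy version): suppose n bidders with monotone subadditive valuations v_i play a pure bid profile b = (b₁,...,b_n) that is a Nash equilibrium (no bidder can strictly increase utility u_i(b) = v_i(W_i(b)) − Σ_{j∈W_i(b)} b_i(j) by any unilateral deviation). Then the social welfare Σ_i v_i(W_i(b)) is at least half of the optimal welfare max over partitions (O₁,...,O_n) of Σ_i v_i(O_i). -/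
open Finset

/-- The highest bid on item `j` among the bidders other than `i` (bids assumed nonnegative). -/
noncomputable def maxOther {n m : ℕ} (b : Fin n → Fin m → ℝ) (i : Fin n) (j : Fin m) : ℝ :=
  (((Finset.univ.erase i).sup fun k => Real.toNNReal (b k j) : NNReal) : ℝ)

/-- Pure Nash equilibria of simultaneous first-price auctions with monotone subadditive bidders
obtain at least half of the optimal welfare.  `alloc` is the (tie-broken) allocation of each
item to a highest bidder; bidder `i` wins `W_i = {j : alloc j = i}` and pays his own bids on it.
The equilibrium condition says that no bidder `i` can profit by deviating to a bid vector `c`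
(the deviation wins `{j : maxOther b i j ≤ c j}`, paying his bid on the items won). -/
theorem stmt10 (n m : ℕ) (v : Fin n → Finset (Fin m) → ℝ)
    (hnn : ∀ i S, 0 ≤ v i S)
    (hmono : ∀ i (S T : Finset (Fin m)), S ⊆ T → v i S ≤ v i T)
    (hsub : ∀ i (S T : Finset (Fin m)), v i (S ∪ T) ≤ v i S + v i T)
    (b : Fin n → Fin m → ℝ) (hb : ∀ i j, 0 ≤ b i j)
    (alloc : Fin m → Fin n)
    (halloc : ∀ j k, b k j ≤ b (alloc j) j)
    (hNE : ∀ i (c : Fin m → ℝ), (∀ j, 0 ≤ c j) →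
      v i (Finset.univ.filter fun j => maxOther b i j ≤ c j) -
          (∑ j ∈ Finset.univ.filter fun j => maxOther b i j ≤ c j, c j) ≤
        v i (Finset.univ.filter fun j => alloc j = i) -
          (∑ j ∈ Finset.univ.filter fun j => alloc j = i, b i j))
    (O : Fin n → Finset (Fin m))
    (hdisj : ∀ i k : Fin n, i ≠ k → Disjoint (O i) (O k))
    (hcover : Finset.univ.biUnion O = Finset.univ) :
    ∑ i, v i (O i) ≤ 2 * ∑ i, v i (Finset.univ.filter fun j => alloc j = i) := by
  have hmo_nn : ∀ i j, 0 ≤ maxOther b i j := fun i j => NNReal.coe_nonneg _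
  have hmo_le : ∀ i j, maxOther b i j ≤ b (alloc j) j := by
    intro i j
    have h1 : ((Finset.univ.erase i).sup fun k => Real.toNNReal (b k j) : NNReal)
        ≤ Real.toNNReal (b (alloc j) j) := by
      apply Finset.sup_le
      intro k _
      exact Real.toNNReal_le_toNNReal (halloc j k)
    calc maxOther b i j ≤ (Real.toNNReal (b (alloc j) j) : ℝ) := by exact_mod_cast h1
      _ = b (alloc j) j := Real.coe_toNNReal _ (hb _ _)
  -- For each i, the deviation bidding maxOther on O i and 0 elsewhere
  have key : ∀ i, v i (O i) - (∑ j ∈ O i, maxOther b i j) ≤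
      v i (Finset.univ.filter fun j => alloc j = i) -
        (∑ j ∈ Finset.univ.filter fun j => alloc j = i, b i j) := by
    intro i
    set c : Fin m → ℝ := fun j => if j ∈ O i then maxOther b i j else 0 with hc
    have hcnn : ∀ j, 0 ≤ c j := by
      intro j; simp only [hc]; split
      · exact hmo_nn i j
      · exact le_refl 0
    have hW := hNE i c hcnn
    set Wdev := Finset.univ.filter fun j => maxOther b i j ≤ c j with hWdev
    have hsubset : O i ⊆ Wdev := by
      intro j hj
      simp only [hWdev, Finset.mem_filter, Finset.mem_univ, true_and, hc, if_pos hj]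
      exact le_rfl
    have hval : v i (O i) ≤ v i Wdev := hmono i _ _ hsubset
    have hpay : (∑ j ∈ Wdev, c j) = ∑ j ∈ O i, maxOther b i j := by
      rw [← Finset.sum_filter_add_sum_filter_not Wdev (fun j => j ∈ O i)]
      have h1 : Wdev.filter (fun j => j ∈ O i) = O i := by
        apply Finset.Subset.antisymm
        · intro j hj; exact (Finset.mem_filter.mp hj).2
        · intro j hj; exact Finset.mem_filter.mpr ⟨hsubset hj, hj⟩
      have h2 : ∑ j ∈ Wdev.filter (fun j => ¬ j ∈ O i), c j = 0 := by
        apply Finset.sum_eq_zero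
        intro j hj
        simp only [hc, if_neg (Finset.mem_filter.mp hj).2]
      rw [h1, h2, add_zero]
      apply Finset.sum_congr rfl
      intro j hj
      simp only [hc, if_pos hj]
    calc v i (O i) - (∑ j ∈ O i, maxOther b i j)
        ≤ v i Wdev - (∑ j ∈ Wdev, c j) := by rw [hpay]; linarith
      _ ≤ _ := hW
  have hsum1 : ∑ i, ∑ j ∈ O i, maxOther b i j ≤ ∑ j, b (alloc j) j := by
    calc ∑ i, ∑ j ∈ O i, maxOther b i j
        ≤ ∑ i, ∑ j ∈ O i, b (alloc j) j :=
          Finset.sum_le_sum fun i _ => Finset.sum_le_sum fun j _ => hmo_le i j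
      _ = ∑ j ∈ Finset.univ.biUnion O, b (alloc j) j :=
          (Finset.sum_biUnion fun i _ k _ hik => hdisj i k hik).symm
      _ = ∑ j, b (alloc j) j := by rw [hcover]
  have hsum2 : (∑ i, ∑ j ∈ Finset.univ.filter fun j => alloc j = i, b i j)
      = ∑ j, b (alloc j) j := by
    rw [← Finset.sum_fiberwise Finset.univ alloc (fun j => b (alloc j) j)]
    apply Finset.sum_congr rfl
    intro i _
    apply Finset.sum_congr rfl
    intro j hj
    rw [(Finset.mem_filter.mp hj).2]
  have hmain : ∑ i, v i (O i) ≤ ∑ i, v i (Finset.univ.filter fun j => alloc j = i) := by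
    have := Finset.sum_le_sum fun i (_ : i ∈ Finset.univ) => key i
    rw [Finset.sum_sub_distrib, Finset.sum_sub_distrib] at this
    linarith
  have hpos : 0 ≤ ∑ i, v i (Finset.univ.filter fun j => alloc j = i) :=
    Finset.sum_nonneg fun i _ => hnn i _
  linarith
end

section
/- In a simultaneous second-price auction (complete-information, pure-strategy version) with strong no-overbidding: if b is a pure Nash equilibrium in which each bidder's bid vector b_i is dominated by v_i, and each v_i is monotone subadditive, then Σ_i v_i(W_i(b)) ≥ (1/2)·max over partitions (O₁,...,O_n) of Σ_i v_i(O_i) − Σ_j max_k b_k(j), and consequently, since Σ_j max_k b_k(j) ≤ Σ_i v_i(W_i(b)) under strong no-overbidding, the welfare at equilibrium is at least 1/4 of the optimum. -/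
open Finset

lemma exists_goodT (m : ℕ) (v : Finset (Fin m) → ℝ) (hnn : ∀ S, 0 ≤ v S)
    (hsub : ∀ S T, v (S ∪ T) ≤ v S + v T)
    (p : Fin m → ℝ) (O : Finset (Fin m)) :
    ∃ T, T ⊆ O ∧ (∀ S, S ⊆ T → ∑ j ∈ S, p j ≤ v S) ∧
      (1/2) * v O - ∑ j ∈ O, p j ≤ v T - ∑ j ∈ T, p j := by
  classical
  set F := O.powerset.filter (fun T => (1/2) * v O ≤ v T + ∑ j ∈ O \ T, p j) with hF
  have hOF : O ∈ F := by
    simp only [hF, mem_filter, mem_powerset]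
    refine ⟨subset_rfl, ?_⟩
    rw [sdiff_self]
    simp
    nlinarith [hnn O]
  obtain ⟨T, hTF, hTmin⟩ := F.exists_min_image Finset.card ⟨O, hOF⟩
  simp only [hF, mem_filter, mem_powerset] at hTF
  obtain ⟨hTO, hTineq⟩ := hTF
  refine ⟨T, hTO, ?_, ?_⟩
  · intro S hST
    by_contra hcon
    push_neg at hcon
    have hSne : S.Nonempty := by
      rcases S.eq_empty_or_nonempty with h | h
      · subst h; simp at hcon; exact absurd (hnn ∅) (not_le.mpr hcon)
      · exact h
    have hunion : (T \ S) ∪ S = T := Finset.sdiff_union_of_subset hST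
    have hsplit : O \ (T \ S) = (O \ T) ∪ S := by
      ext j
      simp only [mem_sdiff, mem_union]
      constructor
      · rintro ⟨hjO, hj⟩
        by_cases hjT : j ∈ T
        · right
          by_contra hjS
          exact hj ⟨hjT, hjS⟩
        · left; exact ⟨hjO, hjT⟩
      · rintro (⟨hjO, hjT⟩ | hjS)
        · exact ⟨hjO, fun h => hjT h.1⟩
        · exact ⟨hTO (hST hjS), fun h => h.2 hjS⟩
    have hdisj' : Disjoint (O \ T) S := by
      apply Finset.disjoint_left.mpr
      intro j hj hjS
      exact (mem_sdiff.mp hj).2 (hST hjS)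
    have hsum : ∑ j ∈ O \ (T \ S), p j = ∑ j ∈ O \ T, p j + ∑ j ∈ S, p j := by
      rw [hsplit, Finset.sum_union hdisj']
    have hvT : v T ≤ v (T \ S) + v S := by
      calc v T = v ((T \ S) ∪ S) := by rw [hunion]
        _ ≤ v (T \ S) + v S := hsub _ _
    have hmemF : T \ S ∈ F := by
      simp only [hF, mem_filter, mem_powerset]
      refine ⟨(Finset.sdiff_subset).trans hTO, ?_⟩
      rw [hsum]; linarith
    have hcard := hTmin _ hmemF
    have hlt : (T \ S).card < T.card := by
      apply Finset.card_lt_card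
      rw [Finset.ssubset_iff_of_subset Finset.sdiff_subset]
      obtain ⟨x, hx⟩ := hSne
      exact ⟨x, hST hx, by simp [hx]⟩
    omega
  · have : ∑ j ∈ O, p j = ∑ j ∈ T, p j + ∑ j ∈ O \ T, p j := by
      rw [← Finset.sum_union (Finset.disjoint_sdiff), Finset.union_sdiff_of_subset hTO]
    linarith

/-- The highest bid on item `j` (bids assumed nonnegative). -/
noncomputable def maxAll {n m : ℕ} (b : Fin n → Fin m → ℝ) (j : Fin m) : ℝ :=
  ((Finset.univ.sup fun k => Real.toNNReal (b k j) : NNReal) : ℝ)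

/-- Pure Nash equilibria of simultaneous second-price auctions under strong no-overbidding:
the welfare is at least `(1/2)·OPT − Σ_j max_k b_k(j)`, and consequently at least `OPT/4`.
Each item `j` goes to the highest bidder `alloc j`, who pays the second-highest bid on it;
deviations are restricted to nonnegative bid vectors dominated by the bidder's valuation. -/
theorem stmt11 (n m : ℕ) (v : Fin n → Finset (Fin m) → ℝ)
    (hnn : ∀ i S, 0 ≤ v i S)
    (hmono : ∀ i (S T : Finset (Fin m)), S ⊆ T → v i S ≤ v i T)
    (hsub : ∀ i (S T : Finset (Fin m)), v i (S ∪ T) ≤ v i S + v i T)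
    (b : Fin n → Fin m → ℝ) (hb : ∀ i j, 0 ≤ b i j)
    (hdom : ∀ i (S : Finset (Fin m)), ∑ j ∈ S, b i j ≤ v i S)
    (alloc : Fin m → Fin n)
    (halloc : ∀ j k, b k j ≤ b (alloc j) j)
    (hNE : ∀ i (c : Fin m → ℝ), (∀ j, 0 ≤ c j) →
      (∀ S : Finset (Fin m), ∑ j ∈ S, c j ≤ v i S) →
      v i (Finset.univ.filter fun j => maxOther b i j ≤ c j) -
          (∑ j ∈ Finset.univ.filter fun j => maxOther b i j ≤ c j, maxOther b i j) ≤
        v i (Finset.univ.filter fun j => alloc j = i) -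
          (∑ j ∈ Finset.univ.filter fun j => alloc j = i, maxOther b i j))
    (O : Fin n → Finset (Fin m))
    (hdisj : ∀ i k : Fin n, i ≠ k → Disjoint (O i) (O k))
    (hcover : Finset.univ.biUnion O = Finset.univ) :
    (1 / 2) * (∑ i, v i (O i)) - (∑ j, maxAll b j) ≤
        ∑ i, v i (Finset.univ.filter fun j => alloc j = i) ∧
      ∑ i, v i (O i) ≤ 4 * ∑ i, v i (Finset.univ.filter fun j => alloc j = i) := by
  classical
  set W : Fin n → Finset (Fin m) := fun i => Finset.univ.filter fun j => alloc j = i with hW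
  have hpnn : ∀ i j, 0 ≤ maxOther b i j := by
    intro i j; unfold maxOther; exact NNReal.coe_nonneg _
  have key : ∀ i, (1/2) * v i (O i) - ∑ j ∈ O i, maxOther b i j ≤
      v i (W i) - ∑ j ∈ W i, maxOther b i j := by
    intro i
    obtain ⟨T, hTO, hTdom, hTineq⟩ := exists_goodT m (v i) (hnn i) (hsub i)
      (fun j => maxOther b i j) (O i)
    set c : Fin m → ℝ := fun j => if j ∈ T then maxOther b i j else 0 with hc
    have hc0 : ∀ j, 0 ≤ c j := by
      intro j; simp only [hc]; split
      · exact hpnn i j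
      · exact le_refl 0
    have hcdom : ∀ S : Finset (Fin m), ∑ j ∈ S, c j ≤ v i S := by
      intro S
      have : ∑ j ∈ S, c j = ∑ j ∈ S ∩ T, maxOther b i j := Finset.sum_ite_mem S T _
      rw [this]
      exact le_trans (hTdom _ (Finset.inter_subset_right))
        (hmono i _ _ Finset.inter_subset_left)
    set A : Finset (Fin m) := Finset.univ.filter fun j => maxOther b i j ≤ c j with hA
    have hTA : T ⊆ A := by
      intro j hj
      simp only [hA, mem_filter, mem_univ, true_and, hc, if_pos hj, le_refl]
    have hsumA : ∑ j ∈ A, maxOther b i j = ∑ j ∈ T, maxOther b i j := by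
      have hsplit : ∑ j ∈ A, maxOther b i j
          = ∑ j ∈ T, maxOther b i j + ∑ j ∈ A \ T, maxOther b i j := by
        rw [← Finset.sum_union (Finset.disjoint_sdiff), Finset.union_sdiff_of_subset hTA]
      have hz : ∑ j ∈ A \ T, maxOther b i j = 0 := by
        apply Finset.sum_eq_zero
        intro j hj
        obtain ⟨hjA, hjT⟩ := Finset.mem_sdiff.mp hj
        have h1 : maxOther b i j ≤ c j := (Finset.mem_filter.mp hjA).2
        rw [hc] at h1
        simp only [if_neg hjT] at h1
        exact le_antisymm h1 (hpnn i j)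
      rw [hsplit, hz, add_zero]
    have hNEi := hNE i c hc0 hcdom
    have h2 : v i T - ∑ j ∈ T, maxOther b i j ≤ v i A - ∑ j ∈ A, maxOther b i j := by
      rw [hsumA]
      have := hmono i T A hTA
      linarith
    calc (1/2) * v i (O i) - ∑ j ∈ O i, maxOther b i j
        ≤ v i T - ∑ j ∈ T, maxOther b i j := hTineq
      _ ≤ v i A - ∑ j ∈ A, maxOther b i j := h2
      _ ≤ v i (W i) - ∑ j ∈ W i, maxOther b i j := hNEi
  have hOle : ∀ i j, maxOther b i j ≤ maxAll b j := by
    intro i j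
    unfold maxOther maxAll
    exact_mod_cast Finset.sup_mono (Finset.erase_subset i Finset.univ)
  have key2 : ∀ i, (1/2) * v i (O i) - ∑ j ∈ O i, maxAll b j ≤ v i (W i) := by
    intro i
    have h1 : ∑ j ∈ O i, maxOther b i j ≤ ∑ j ∈ O i, maxAll b j :=
      Finset.sum_le_sum fun j _ => hOle i j
    have h2 : 0 ≤ ∑ j ∈ W i, maxOther b i j :=
      Finset.sum_nonneg fun j _ => hpnn i j
    have := key i
    linarith
  have hpart : ∑ i, ∑ j ∈ O i, maxAll b j = ∑ j, maxAll b j := by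
    rw [← Finset.sum_biUnion (fun i _ k _ hik => hdisj i k hik), hcover]
  have goal1 : (1 / 2) * (∑ i, v i (O i)) - (∑ j, maxAll b j) ≤ ∑ i, v i (W i) := by
    have := Finset.sum_le_sum fun i (_ : i ∈ (Finset.univ : Finset (Fin n))) => key2 i
    rw [Finset.sum_sub_distrib, hpart, ← Finset.mul_sum] at this
    linarith
  have hmaxall : ∀ j, maxAll b j = b (alloc j) j := by
    intro j
    have : Finset.univ.sup (fun k => Real.toNNReal (b k j)) = Real.toNNReal (b (alloc j) j) :=
      le_antisymm (Finset.sup_le fun k _ => Real.toNNReal_mono (halloc j k))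
        (Finset.le_sup (f := fun k => Real.toNNReal (b k j)) (Finset.mem_univ (alloc j)))
    unfold maxAll
    rw [this, Real.coe_toNNReal _ (hb _ _)]
  have hBleC : ∑ j, maxAll b j ≤ ∑ i, v i (W i) := by
    have hfib : ∑ i, ∑ j ∈ W i, b (alloc j) j = ∑ j, b (alloc j) j :=
      Finset.sum_fiberwise Finset.univ alloc (fun j => b (alloc j) j)
    have hcongr : ∀ i, ∑ j ∈ W i, b (alloc j) j = ∑ j ∈ W i, b i j := by
      intro i
      apply Finset.sum_congr rfl
      intro j hj
      rw [(Finset.mem_filter.mp hj).2]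
    calc ∑ j, maxAll b j = ∑ j, b (alloc j) j := Finset.sum_congr rfl fun j _ => hmaxall j
      _ = ∑ i, ∑ j ∈ W i, b (alloc j) j := hfib.symm
      _ = ∑ i, ∑ j ∈ W i, b i j := Finset.sum_congr rfl fun i _ => hcongr i
      _ ≤ ∑ i, v i (W i) := Finset.sum_le_sum fun i _ => hdom i (W i)
  exact ⟨goal1, by linarith⟩
end
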